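/- (Cost bound, deterministic core of Theorem 4, inequality (26).) Let Q, C : ℕ → ℝ with Q(0) = 0, R_bug ∈ ℝ, and suppose Q(τ+1) = max(Q(τ) + C(τ) − R_bug, 0) for all τ. Let T ≥ 1, K ≥ 1, B ∈ ℝ, γ ∈ ℝ with B + V·γ ≥ 0 (V ≥ 0), and suppose that for every frame k ∈ {0, …, K−1}: (1/2)·Q((k+1)T)² − (1/2)·Q(kT)² ≤ B·T + V·T·γ. Then Q(KT) ≤ √(2·K·T·(B + V·γ)), and hence (1/(KT))·∑_{τ=0}^{KT−1} C(τ) ≤ R_bug + √(2·(B + V·γ)/(K·T)). -/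

import Mathlib

/-- Cost bound (deterministic core of Theorem 4, inequality (26)). -/
theorem cost_bound (Q C : ℕ → ℝ) (Rbug V B γ : ℝ) (T K : ℕ)
    (hQ0 : Q 0 = 0)
    (hQ : ∀ τ, Q (τ + 1) = max (Q τ + C τ - Rbug) 0)
    (hT : 1 ≤ T) (hK : 1 ≤ K) (hV : 0 ≤ V) (hBVγ : 0 ≤ B + V * γ)
    (hframe : ∀ k < K,
      (1/2) * (Q ((k + 1) * T))^2 - (1/2) * (Q (k * T))^2 ≤ B * T + V * T * γ) :
    Q (K * T) ≤ Real.sqrt (2 * K * T * (B + V * γ)) ∧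
    (1 / ((K : ℝ) * T)) * ∑ τ ∈ Finset.range (K * T), C τ ≤
      Rbug + Real.sqrt (2 * (B + V * γ) / ((K : ℝ) * T)) := by
  have hQnn : ∀ τ, 0 ≤ Q τ := by
    intro τ
    cases τ with
    | zero => simp [hQ0]
    | succ n => rw [hQ]; exact le_max_right _ _
  have hTpos : (0:ℝ) < T := by exact_mod_cast hT
  have hKpos : (0:ℝ) < K := by exact_mod_cast hK
  have hKT : (0:ℝ) < (K:ℝ) * T := mul_pos hKpos hTpos
  -- telescoped bound
  have htel : ∀ n ≤ K, (1/2) * (Q (n * T))^2 ≤ n * (B * T + V * T * γ) := by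
    intro n hn
    induction n with
    | zero => simp [hQ0]
    | succ m ih =>
      have h1 := hframe m (lt_of_lt_of_le (Nat.lt_succ_self m) hn)
      have h2 := ih (le_trans (Nat.le_succ m) hn)
      push_cast
      nlinarith
  have hQsq : (Q (K * T))^2 ≤ 2 * K * T * (B + V * γ) := by
    have := htel K le_rfl
    nlinarith [hQnn (K * T)]
  have hq : Q (K * T) ≤ Real.sqrt (2 * K * T * (B + V * γ)) := by
    have := Real.sqrt_le_sqrt hQsq
    rwa [Real.sqrt_sq (hQnn _)] at this
  refine ⟨hq, ?_⟩
  -- per-slot: C τ - Rbug ≤ Q (τ+1) - Q τ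
  have hsum : ∑ τ ∈ Finset.range (K * T), (C τ - Rbug) ≤ Q (K * T) := by
    have := Finset.sum_range_sub Q (K * T)
    calc ∑ τ ∈ Finset.range (K * T), (C τ - Rbug)
        ≤ ∑ τ ∈ Finset.range (K * T), (Q (τ + 1) - Q τ) := by
          apply Finset.sum_le_sum
          intro i _
          have : Q i + C i - Rbug ≤ Q (i + 1) := by rw [hQ]; exact le_max_left _ _
          linarith
      _ = Q (K * T) - Q 0 := this
      _ = Q (K * T) := by rw [hQ0]; ring
  have hsum' : ∑ τ ∈ Finset.range (K * T), C τ ≤ (K * T : ℝ) * Rbug + Q (K * T) := by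
    have hcard : ((K * T : ℕ) : ℝ) = (K : ℝ) * T := by push_cast; ring
    rw [Finset.sum_sub_distrib, Finset.sum_const, Finset.card_range, nsmul_eq_mul, hcard] at hsum
    linarith
  -- sqrt identity
  have hsqrt : Real.sqrt (2 * K * T * (B + V * γ)) =
      Real.sqrt (2 * (B + V * γ) / ((K : ℝ) * T)) * ((K : ℝ) * T) := by
    rw [← Real.sqrt_sq hKT.le, ← Real.sqrt_mul (by positivity)]
    congr 1
    field_simp
    rw [← mul_pow, Real.sqrt_sq hKT.le]
    ring
  have hfinal : (1 / ((K : ℝ) * T)) * ∑ τ ∈ Finset.range (K * T), C τ ≤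
      Rbug + Real.sqrt (2 * (B + V * γ) / ((K : ℝ) * T)) := by
    rw [div_mul_eq_mul_div, one_mul, div_le_iff₀ hKT]
    calc ∑ τ ∈ Finset.range (K * T), C τ ≤ (K * T : ℝ) * Rbug + Q (K * T) := hsum'
      _ ≤ (K * T : ℝ) * Rbug + Real.sqrt (2 * K * T * (B + V * γ)) := by linarith
      _ = (Rbug + Real.sqrt (2 * (B + V * γ) / ((K : ℝ) * T))) * ((K : ℝ) * T) := by
          rw [hsqrt]; ring
  exact hfinal
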